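/- Let G be a simplicial group. Then G_2 is isomorphic to the iterated semidirect product (NG_2 ⋊ s_1(NG_1)) ⋊ (s_0(NG_1) ⋊ s_1 s_0(NG_0)), where NG_2 = Ker(d_0^2) ∩ Ker(d_1^2) and NG_1 = Ker(d_0^1). -/
import Mathlib


/-- A simplicial group: groups `G n` with face maps `d n i : G (n+1) →* G n`
and degeneracies `s n i : G n →* G (n+1)` satisfying the simplicial identities
(asserted in the meaningful index ranges). -/
structure SGrp where
  G : ℕ → Type
  grp : ∀ n, Group (G n)
  d : (n : ℕ) → ℕ → (G (n+1) →* G n)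
  s : (n : ℕ) → ℕ → (G n →* G (n+1))
  dd : ∀ n i j, i < j → j ≤ n + 2 → ∀ x,
    d n i (d (n+1) j x) = d n (j-1) (d (n+1) i x)
  ds_lt : ∀ n i j, i < j → j ≤ n + 1 → ∀ x,
    d (n+1) i (s (n+1) j x) = s n (j-1) (d n i x)
  ds_eq : ∀ n j, j ≤ n → ∀ x, d n j (s n j x) = x
  ds_succ : ∀ n j, j ≤ n → ∀ x, d n (j+1) (s n j x) = x
  ds_gt : ∀ n i j, j + 1 < i → i ≤ n + 2 → ∀ x,
    d (n+1) i (s (n+1) j x) = s n j (d n (i-1) x)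
  ss : ∀ n i j, i ≤ j → j ≤ n → ∀ x,
    s (n+1) i (s n j x) = s (n+1) (j+1) (s n i x)

attribute [instance] SGrp.grp

/-- Moore complex: `NG 0 = G 0`, `NG (n+1) = ⋂_{i ≤ n} ker (d_i)`. -/
def SGrp.NG (X : SGrp) : (n : ℕ) → Subgroup (X.G n)
  | 0 => ⊤
  | (n+1) => ⨅ i ∈ Finset.range (n+1), (X.d n i).ker

/-- Transport along an equality of dimensions. -/
def SGrp.castHom (X : SGrp) {a b : ℕ} (h : a = b) : X.G a →* X.G b where
  toFun x := h ▸ x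
  map_one' := by subst h; rfl
  map_mul' x y := by subst h; rfl

/-- Composite degeneracy `s_α = s_{i_l} ⋯ s_{i_1}` for `α = [i_l, …, i_1]`
(head applied last). -/
def SGrp.sComp (X : SGrp) : (m : ℕ) → (α : List ℕ) → (X.G m →* X.G (m + α.length))
  | _, [] => MonoidHom.id _
  | m, i :: rest => (X.s (m + rest.length) i).comp (X.sComp m rest)

/-- `s_α : G_{n-#α} →* G_n` for `α ∈ S(n)` (the trivial hom if lengths mismatch). -/
def SGrp.sMapN (X : SGrp) (n : ℕ) (α : List ℕ) : X.G (n - α.length) →* X.G n :=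
  if h : n - α.length + α.length = n then
    (X.castHom h).comp (X.sComp (n - α.length) α) else 1

/-- `p_j(z) = z ⬝ (s_j d_j z)⁻¹` on `G (n+1)`. -/
def SGrp.p (X : SGrp) (n j : ℕ) (z : X.G (n+1)) : X.G (n+1) :=
  z * (X.s n j (X.d n j z))⁻¹

/-- `pComp n j = p_j ∘ ⋯ ∘ p_0` on `G (n+1)`. -/
def SGrp.pComp (X : SGrp) (n : ℕ) : ℕ → X.G (n+1) → X.G (n+1)
  | 0 => X.p n 0
  | (j+1) => fun z => X.p n (j+1) (X.pComp n j z)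

/-- `pComp1 n l = p_l ∘ ⋯ ∘ p_1` on `G (n+1)` (identity for `l = 0`). -/
def SGrp.pComp1 (X : SGrp) (n : ℕ) : ℕ → X.G (n+1) → X.G (n+1)
  | 0 => id
  | (j+1) => fun z => X.p n (j+1) (X.pComp1 n j z)

/-- The ordering of `S(n)` from the paper: `α < β` iff comparing from the
smallest indices (the reversed lists), either the first difference has the
index of `α` larger, or `α`'s indices (from the small end) form a proper
prefix of `β`'s. -/
def Slt (α β : List ℕ) : Prop := List.Lex (· > ·) α.reverse β.reverse

/-- `α` represents a nonidentity element of `S(N)`: a nonempty strictly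
decreasing tuple of indices `< N`. -/
def SIdx (N : ℕ) (α : List ℕ) : Prop :=
  α ≠ [] ∧ α.Chain' (· > ·) ∧ α.length ≤ N ∧ ∀ i ∈ α, i < N

namespace SGrp

variable (X : SGrp)

lemma d00s00 (x : X.G 0) : X.d 0 0 (X.s 0 0 x) = x := X.ds_eq 0 0 (by omega) x
lemma d10s10 (x : X.G 1) : X.d 1 0 (X.s 1 0 x) = x := X.ds_eq 1 0 (by omega) x
lemma d11s10 (x : X.G 1) : X.d 1 1 (X.s 1 0 x) = x := X.ds_succ 1 0 (by omega) x
lemma d11s11 (x : X.G 1) : X.d 1 1 (X.s 1 1 x) = x := X.ds_eq 1 1 (by omega) x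
lemma d10s11 (x : X.G 1) : X.d 1 0 (X.s 1 1 x) = X.s 0 0 (X.d 0 0 x) :=
  X.ds_lt 0 0 1 (by omega) (by omega) x
lemma dd001 (x : X.G 2) : X.d 0 0 (X.d 1 1 x) = X.d 0 0 (X.d 1 0 x) :=
  X.dd 0 0 1 (by omega) (by omega) x
lemma ss00 (x : X.G 0) : X.s 1 0 (X.s 0 0 x) = X.s 1 1 (X.s 0 0 x) :=
  X.ss 0 0 0 le_rfl le_rfl x

lemma mem_NG1 {x : X.G 1} : x ∈ X.NG 1 ↔ X.d 0 0 x = 1 := by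
  simp [SGrp.NG, Subgroup.mem_iInf, Finset.mem_range, MonoidHom.mem_ker,
    Nat.lt_one_iff]

lemma mem_NG2 {x : X.G 2} : x ∈ X.NG 2 ↔ X.d 1 0 x = 1 ∧ X.d 1 1 x = 1 := by
  simp only [SGrp.NG, Subgroup.mem_iInf, Finset.mem_range, MonoidHom.mem_ker,
    Nat.lt_succ_iff, Nat.le_one_iff_eq_zero_or_eq_one]
  constructor
  · intro h; exact ⟨h 0 (Or.inl rfl), h 1 (Or.inr rfl)⟩
  · rintro ⟨h0, h1⟩ i (rfl | rfl) <;> assumption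

end SGrp

/-- `G_2 ≅ (NG_2 ⋊ s₁NG_1) ⋊ (s₀NG_1 ⋊ s₁s₀NG_0)` as an internal
iterated semidirect product: the multiplication map is bijective, `NG_2` is
normal in `NG_2 ⊔ s₁NG_1`, `s₀NG_1` is normal in `s₀NG_1 ⊔ s₁s₀NG_0`, and
`NG_2 ⊔ s₁NG_1` is normal in `G_2`. -/
theorem stmt3 (X : SGrp) :
    let A : Subgroup (X.G 2) := X.NG 2
    let B : Subgroup (X.G 2) := (X.NG 1).map (X.s 1 1)
    let C : Subgroup (X.G 2) := (X.NG 1).map (X.s 1 0)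
    let D : Subgroup (X.G 2) := ((X.s 1 1).comp (X.s 0 0)).range
    Function.Bijective
      (fun q : A × B × C × D => (q.1 : X.G 2) * q.2.1 * q.2.2.1 * q.2.2.2) ∧
    (A.subgroupOf (A ⊔ B)).Normal ∧
    (C.subgroupOf (C ⊔ D)).Normal ∧
    (A ⊔ B).Normal := by
  intro A B C D
  -- recovery computations
  have H1 : ∀ (a : X.G 2) (m m' : X.G 1) (t : X.G 0),
      X.d 1 0 a = 1 → X.d 0 0 m = 1 →
      X.d 1 0 (a * X.s 1 1 m * X.s 1 0 m' * X.s 1 1 (X.s 0 0 t))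
        = m' * X.s 0 0 t := by
    intro a m m' t ha hm
    simp [map_mul, X.d10s11, X.d10s10, X.d00s00, ha, hm]
  have H2 : ∀ (a : X.G 2) (m m' : X.G 1) (t : X.G 0),
      X.d 1 0 a = 1 → X.d 0 0 m = 1 → X.d 0 0 m' = 1 →
      X.d 0 0 (X.d 1 0 (a * X.s 1 1 m * X.s 1 0 m' * X.s 1 1 (X.s 0 0 t)))
        = t := by
    intro a m m' t ha hm hm'
    rw [H1 a m m' t ha hm]
    simp [map_mul, X.d00s00, hm']
  refine ⟨⟨?_, ?_⟩, ?_, ?_, ?_⟩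
  · -- injective
    rintro ⟨⟨a1, ha1⟩, ⟨b1, hb1⟩, ⟨c1, hc1⟩, ⟨e1, he1⟩⟩
      ⟨⟨a2, ha2⟩, ⟨b2, hb2⟩, ⟨c2, hc2⟩, ⟨e2, he2⟩⟩ h
    obtain ⟨m1, hm1, rfl⟩ := hb1
    obtain ⟨m2, hm2, rfl⟩ := hb2
    obtain ⟨n1, hn1, rfl⟩ := hc1
    obtain ⟨n2, hn2, rfl⟩ := hc2
    obtain ⟨t1, rfl⟩ := he1
    obtain ⟨t2, rfl⟩ := he2
    simp only [MonoidHom.coe_comp, Function.comp_apply] at h ⊢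
    have ha1' := X.mem_NG2.mp ha1
    have ha2' := X.mem_NG2.mp ha2
    have hm1' := X.mem_NG1.mp hm1
    have hm2' := X.mem_NG1.mp hm2
    have hn1' := X.mem_NG1.mp hn1
    have hn2' := X.mem_NG1.mp hn2
    -- recover t
    have ht : t1 = t2 := by
      have e1 := H2 a1 m1 n1 t1 ha1'.1 hm1' hn1'
      have e2 := H2 a2 m2 n2 t2 ha2'.1 hm2' hn2'
      rw [h] at e1; rw [e1] at e2; exact e2
    subst ht
    -- recover n
    have hn : n1 = n2 := by
      have e1 := H1 a1 m1 n1 t1 ha1'.1 hm1'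
      have e2 := H1 a2 m2 n2 t1 ha2'.1 hm2'
      rw [h] at e1; rw [e1] at e2
      exact mul_right_cancel e2
    subst hn
    -- cancel the right part
    have hz : a1 * X.s 1 1 m1 = a2 * X.s 1 1 m2 :=
      mul_right_cancel (mul_right_cancel h)
    -- recover m
    have hm : m1 = m2 := by
      have e1 : X.d 1 1 (a1 * X.s 1 1 m1) = m1 := by
        simp [map_mul, ha1'.2, X.d11s11]
      have e2 : X.d 1 1 (a2 * X.s 1 1 m2) = m2 := by
        simp [map_mul, ha2'.2, X.d11s11]
      rw [hz] at e1; rw [e1] at e2; exact e2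
    subst hm
    have haa : a1 = a2 := mul_right_cancel hz
    subst haa
    rfl
  · -- surjective
    intro g
    set t : X.G 0 := X.d 0 0 (X.d 1 0 g) with htdef
    set m' : X.G 1 := X.d 1 0 g * (X.s 0 0 t)⁻¹ with hm'def
    set z : X.G 2 := g * (X.s 1 0 (X.d 1 0 g))⁻¹ with hzdef
    set m : X.G 1 := X.d 1 1 z with hmdef
    set a : X.G 2 := z * (X.s 1 1 m)⁻¹ with hadef
    have hz0 : X.d 1 0 z = 1 := by
      rw [hzdef]; simp [map_mul, X.d10s10]
    have hm0 : X.d 0 0 m = 1 := by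
      rw [hmdef, X.dd001, hz0, map_one]
    have hn0 : X.d 0 0 m' = 1 := by
      rw [hm'def]; simp [map_mul, X.d00s00, htdef]
    have ha0 : X.d 1 0 a = 1 ∧ X.d 1 1 a = 1 := by
      constructor
      · rw [hadef]; simp [map_mul, X.d10s11, hz0, hm0]
      · rw [hadef]; simp [map_mul, X.d11s11, hmdef]
    refine ⟨⟨⟨a, X.mem_NG2.mpr ha0⟩, ⟨X.s 1 1 m, ⟨m, X.mem_NG1.mpr hm0, rfl⟩⟩,
      ⟨X.s 1 0 m', ⟨m', X.mem_NG1.mpr hn0, rfl⟩⟩,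
      ⟨X.s 1 1 (X.s 0 0 t), ⟨t, rfl⟩⟩⟩, ?_⟩
    show a * X.s 1 1 m * X.s 1 0 m' * X.s 1 1 (X.s 0 0 t) = g
    rw [← X.ss00 t, mul_assoc (a * X.s 1 1 m), ← map_mul]
    have h1 : m' * X.s 0 0 t = X.d 1 0 g := by rw [hm'def]; group
    rw [h1, hadef, hzdef]
    group
  · -- A normal in A ⊔ B
    constructor
    intro n hn g
    rw [Subgroup.mem_subgroupOf] at hn ⊢
    obtain ⟨h0, h1⟩ := X.mem_NG2.mp hn
    refine X.mem_NG2.mpr ⟨?_, ?_⟩ <;>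
      simp [map_mul, h0, h1]
  · -- C normal in C ⊔ D
    have hrange : C ⊔ D ≤ (X.s 1 0).range := by
      apply sup_le
      · rintro x ⟨mm, _, rfl⟩; exact ⟨mm, rfl⟩
      · rintro x ⟨tt, rfl⟩
        exact ⟨X.s 0 0 tt, X.ss00 tt⟩
    constructor
    intro n hn g
    rw [Subgroup.mem_subgroupOf] at hn ⊢
    obtain ⟨mm, hmm, hs⟩ := hn
    obtain ⟨y, hy⟩ := hrange g.2
    show ((g : X.G 2) * n * (g : X.G 2)⁻¹) ∈ C
    refine ⟨y * mm * y⁻¹, ?_, ?_⟩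
    · refine X.mem_NG1.mpr ?_
      simp [map_mul, X.mem_NG1.mp hmm]
    · rw [map_mul, map_mul, map_inv, hy, hs]
  · -- A ⊔ B normal
    have hAB : A ⊔ B = (X.d 1 0).ker := by
      apply le_antisymm
      · apply sup_le
        · intro x hx
          exact (X.mem_NG2.mp hx).1
        · rintro x ⟨mm, hmm, rfl⟩
          show X.d 1 0 (X.s 1 1 mm) = 1
          rw [X.d10s11, X.mem_NG1.mp hmm, map_one]
      · intro zz hz
        have hz0 : X.d 1 0 zz = 1 := hz
        have hmm : X.d 1 1 zz ∈ X.NG 1 :=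
          X.mem_NG1.mpr (by rw [X.dd001, hz0, map_one])
        have hb : X.s 1 1 (X.d 1 1 zz) ∈ B := ⟨_, hmm, rfl⟩
        have ha : zz * (X.s 1 1 (X.d 1 1 zz))⁻¹ ∈ A := by
          refine X.mem_NG2.mpr ⟨?_, ?_⟩
          · simp [map_mul, X.d10s11, X.dd001, hz0]
          · simp [map_mul, X.d11s11]
        have := mul_mem (Subgroup.mem_sup_left ha) (Subgroup.mem_sup_right hb)
        simpa using this
    rw [hAB]
    exact (X.d 1 0).normal_ker
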